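/- Let d ≥ 2 and suppose there are m orthonormal bases B_0,...,B_{m-1} of ℂ^d that together distinguish all pure states, i.e., the map sending each pure state ρ to the family of probabilities (⟨φ_j^k, ρ φ_j^k⟩)_{j=0,...,m-1; k=0,...,d-1} over all basis vectors φ_j^k ∈ B_j is injective on pure states. Then there exists a POVM on ℂ^d with exactly m(d−1)+1 elements, each of rank at most one, such that the map sending each pure state ρ to its outcome probability vector under this POVM is injective on pure states (i.e., a rank-1 PSIR-complete POVM with m(d−1)+1 elements exists). -/

import Mathlib

open Matrix BigOperators ComplexOrder

/-- The pure state (rank-one projection) `|φ⟩⟨φ|` associated to a vector `φ`. -/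
noncomputable def pureState {d : ℕ} (φ : Fin d → ℂ) : Matrix (Fin d) (Fin d) ℂ :=
  Matrix.vecMulVec φ (star φ)

/-- `φ` is a unit vector. -/
def IsUnitVec {d : ℕ} (φ : Fin d → ℂ) : Prop := star φ ⬝ᵥ φ = 1


lemma pureState_eq_col_mul_row {d : ℕ} (v : Fin d → ℂ) :
    pureState v = Matrix.replicateCol (Fin 1) v * (Matrix.replicateCol (Fin 1) v)ᴴ := by
  rw [Matrix.conjTranspose_replicateCol]
  exact Matrix.vecMulVec_eq (Fin 1) v (star v)

lemma pureState_posSemidef {d : ℕ} (v : Fin d → ℂ) : (pureState v).PosSemidef := by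
  rw [pureState_eq_col_mul_row]
  exact Matrix.posSemidef_self_mul_conjTranspose _

lemma pureState_rank_le {d : ℕ} (v : Fin d → ℂ) : (pureState v).rank ≤ 1 := by
  rw [pureState_eq_col_mul_row]
  refine le_trans (Matrix.rank_mul_le_left _ _) ?_
  simpa using Matrix.rank_le_card_width (Matrix.replicateCol (Fin 1) v)

lemma conj_pureState {d : ℕ} {B : Matrix (Fin d) (Fin d) ℂ} (hB : B.IsHermitian)
    (v : Fin d → ℂ) : B * pureState v * B = pureState (B *ᵥ v) := by
  ext i j
  simp only [pureState, Matrix.mul_apply, Matrix.vecMulVec_apply, Pi.star_apply,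
    Matrix.mulVec, dotProduct, Finset.sum_mul, Finset.mul_sum]
  rw [Finset.sum_comm]
  refine Finset.sum_congr rfl fun k _ => ?_
  have hBk : ∀ a b : Fin d, star (B a b) = B b a := fun a b => by
    conv_rhs => rw [← hB.eq]
    simp [Matrix.conjTranspose_apply]
  rw [star_sum, Finset.mul_sum]
  refine Finset.sum_congr rfl fun l _ => ?_
  simp only [star_mul']
  rw [hBk j l]
  ring

lemma trace_mul_pureState {d : ℕ} (M : Matrix (Fin d) (Fin d) ℂ) (v : Fin d → ℂ) :
    (M * pureState v).trace = star v ⬝ᵥ (M *ᵥ v) := by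
  simp only [Matrix.trace, Matrix.diag, Matrix.mul_apply, pureState, Matrix.vecMulVec_apply,
    Pi.star_apply, Matrix.mulVec, dotProduct, Finset.mul_sum]
  refine Finset.sum_congr rfl fun i _ => Finset.sum_congr rfl fun j _ => ?_
  ring

lemma trace_pureState {d : ℕ} (v : Fin d → ℂ) : (pureState v).trace = star v ⬝ᵥ v := by
  simp only [Matrix.trace, Matrix.diag, pureState, Matrix.vecMulVec_apply, Pi.star_apply,
    dotProduct]
  exact Finset.sum_congr rfl fun i _ => mul_comm _ _

lemma pureState_mulVec {d : ℕ} (a b : Fin d → ℂ) :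
    pureState a *ᵥ b = (star a ⬝ᵥ b) • a := by
  ext i
  simp only [pureState, Matrix.mulVec, Matrix.vecMulVec_apply, Pi.star_apply, dotProduct,
    Pi.smul_apply, smul_eq_mul, Finset.sum_mul]
  refine Finset.sum_congr rfl fun j _ => ?_
  ring

lemma trace_pureState_pureState {d : ℕ} (a b : Fin d → ℂ) :
    (pureState a * pureState b).trace = (star a ⬝ᵥ b) * (star b ⬝ᵥ a) := by
  rw [trace_mul_pureState, pureState_mulVec, dotProduct_smul]
  rfl

lemma trace_swap {d : ℕ} {B : Matrix (Fin d) (Fin d) ℂ} (hB : B.IsHermitian) (x u : Fin d → ℂ) :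
    (pureState x * pureState (B *ᵥ u)).trace = (pureState (B *ᵥ x) * pureState u).trace := by
  rw [trace_pureState_pureState, trace_pureState_pureState,
    Matrix.star_mulVec, Matrix.star_mulVec, hB.eq,
    Matrix.dotProduct_mulVec, Matrix.dotProduct_mulVec]

lemma pureState_smul {d : ℕ} (a : ℂ) (v : Fin d → ℂ) :
    pureState (a • v) = (a * star a) • pureState v := by
  ext i j
  simp only [pureState, Matrix.vecMulVec_apply, Pi.star_apply, Pi.smul_apply, smul_eq_mul,
    Matrix.smul_apply, star_mul']
  ring

lemma sum_pureState_eq_one {d : ℕ} (w : Fin d → Fin d → ℂ)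
    (h : ∀ k l, star (w k) ⬝ᵥ w l = if k = l then 1 else 0) :
    ∑ k, pureState (w k) = 1 := by
  classical
  set M : Matrix (Fin d) (Fin d) ℂ := Matrix.of fun i k => w k i with hM
  have h1 : Mᴴ * M = 1 := by
    ext k l
    have hk := h k l
    simp only [dotProduct, Pi.star_apply] at hk
    simpa [Matrix.mul_apply, Matrix.conjTranspose_apply, hM, Matrix.one_apply] using hk
  have h2 : M * Mᴴ = 1 := mul_eq_one_comm.mp h1
  calc ∑ k, pureState (w k) = M * Mᴴ := by
        ext i l
        simp [Matrix.sum_apply, pureState, Matrix.vecMulVec_apply, Matrix.mul_apply,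
          Matrix.conjTranspose_apply, hM]
    _ = 1 := h2

set_option maxHeartbeats 1600000 in
theorem stmt_2 {d m : ℕ} (hd : 2 ≤ d) (φ : Fin m → Fin d → Fin d → ℂ)
    (horth : ∀ j k l, star (φ j k) ⬝ᵥ φ j l = if k = l then 1 else 0)
    (hdist : ∀ ψ₁ ψ₂ : Fin d → ℂ, IsUnitVec ψ₁ → IsUnitVec ψ₂ →
      (∀ j k, star (φ j k) ⬝ᵥ (pureState ψ₁).mulVec (φ j k) =
              star (φ j k) ⬝ᵥ (pureState ψ₂).mulVec (φ j k)) →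
      pureState ψ₁ = pureState ψ₂) :
    ∃ F : Fin (m * (d - 1) + 1) → Matrix (Fin d) (Fin d) ℂ,
      (∀ k, (F k).PosSemidef) ∧ (∀ k, (F k).rank ≤ 1) ∧ (∑ k, F k = 1) ∧
      (∀ ψ₁ ψ₂ : Fin d → ℂ, IsUnitVec ψ₁ → IsUnitVec ψ₂ →
        (∀ k, (pureState ψ₁ * F k).trace = (pureState ψ₂ * F k).trace) →
        pureState ψ₁ = pureState ψ₂) := by
  classical
  rcases Nat.eq_zero_or_pos m with hm0 | hm0
  · -- m = 0 : contradiction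
    exfalso
    subst hm0
    set e0 : Fin d → ℂ := Pi.single (⟨0, by omega⟩ : Fin d) 1 with he0
    set e1 : Fin d → ℂ := Pi.single (⟨1, by omega⟩ : Fin d) 1 with he1
    have hu0 : IsUnitVec e0 := by
      simp [IsUnitVec, he0, dotProduct, Pi.single_apply, apply_ite]
    have hu1 : IsUnitVec e1 := by
      simp [IsUnitVec, he1, dotProduct, Pi.single_apply, apply_ite]
    have heq := hdist e0 e1 hu0 hu1 (fun j _ => j.elim0)
    have h00 := congrFun (congrFun heq ⟨0, by omega⟩) ⟨0, by omega⟩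
    have hne : (⟨0, by omega⟩ : Fin d) ≠ ⟨1, by omega⟩ := Fin.ne_of_val_ne (by norm_num)
    simp [pureState, Matrix.vecMulVec_apply, he0, he1, Pi.single_apply, hne] at h00
  · obtain ⟨m', rfl⟩ : ∃ m', m = m' + 1 := ⟨m - 1, by omega⟩
    obtain ⟨d', rfl⟩ : ∃ d', d = d' + 1 := ⟨d - 1, by omega⟩
    simp only [Nat.succ_sub_one]
    set M := (m' + 1) * d' with hMdef
    set vec : Fin (M + 1) → Fin (d' + 1) → ℂ :=
      Fin.lastCases (φ 0 (Fin.last d'))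
        (fun i => φ (finProdFinEquiv.symm i).1 (Fin.castSucc (finProdFinEquiv.symm i).2))
      with hvec
    have hbasis : ∀ j, ∑ k, pureState (φ j k) = 1 := fun j =>
      sum_pureState_eq_one (φ j) (horth j)
    set T : Matrix (Fin (d' + 1)) (Fin (d' + 1)) ℂ := ∑ i, pureState (vec i) with hT
    have hT1 : T = (∑ j, ∑ k : Fin d', pureState (φ j (Fin.castSucc k)))
        + pureState (φ 0 (Fin.last d')) := by
      rw [hT, Fin.sum_univ_castSucc (f := fun i => pureState (vec i))]
      congr 1
      · rw [← Finset.sum_product', Finset.univ_product_univ]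
        refine Fintype.sum_equiv finProdFinEquiv.symm _ _ fun i => ?_
        simp only [hvec, Fin.lastCases_castSucc]
      · simp only [hvec, Fin.lastCases_last]
    have hone : (∑ k : Fin d', pureState (φ 0 (Fin.castSucc k)))
        + pureState (φ 0 (Fin.last d')) = 1 := by
      rw [← Fin.sum_univ_castSucc (f := fun k => pureState (φ 0 k))]
      exact hbasis 0
    have hTsum : T = (∑ j ∈ Finset.univ.erase 0,
        ∑ k : Fin d', pureState (φ j (Fin.castSucc k))) + 1 := by
      rw [hT1, ← Finset.add_sum_erase Finset.univ _ (Finset.mem_univ 0), ← hone]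
      abel
    have hS : (∑ j ∈ Finset.univ.erase (0 : Fin (m' + 1)),
        ∑ k : Fin d', pureState (φ j (Fin.castSucc k))).PosSemidef := by
      refine Finset.sum_induction _ _ (fun A B hA hB => hA.add hB) Matrix.PosSemidef.zero ?_
      intro j _
      refine Finset.sum_induction _ _ (fun A B hA hB => hA.add hB) Matrix.PosSemidef.zero ?_
      exact fun k _ => pureState_posSemidef _
    have hTpd : T.PosDef := by
      rw [hTsum]
      exact Matrix.PosDef.posSemidef_add hS Matrix.PosDef.one
    obtain ⟨C, hCH, hCC⟩ : ∃ C : Matrix (Fin (d' + 1)) (Fin (d' + 1)) ℂ,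
        C.IsHermitian ∧ C * C = T :=
      open scoped MatrixOrder in
      ⟨CFC.sqrt T, (CFC.sqrt_nonneg T).posSemidef.isHermitian,
        CFC.sqrt_mul_sqrt_self T hTpd.posSemidef.nonneg⟩
    have hdetC : IsUnit C.det := by
      have h1 : IsUnit T.det := hTpd.det_pos.ne'.isUnit
      rw [← hCC, Matrix.det_mul] at h1
      exact isUnit_of_mul_isUnit_left h1
    set B := C⁻¹ with hBdef
    have hBC : B * C = 1 := Matrix.nonsing_inv_mul C hdetC
    have hCB : C * B = 1 := Matrix.mul_nonsing_inv C hdetC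
    have hBH : B.IsHermitian := by
      show Bᴴ = B
      rw [hBdef, Matrix.conjTranspose_nonsing_inv, hCH.eq]
    refine ⟨fun k => pureState (B *ᵥ vec k), fun k => pureState_posSemidef _,
      fun k => pureState_rank_le _, ?_, ?_⟩
    · have hrw : ∀ k : Fin (M + 1), pureState (B *ᵥ vec k) = B * pureState (vec k) * B :=
        fun k => (conj_pureState hBH _).symm
      calc ∑ k, pureState (B *ᵥ vec k) = ∑ k, B * pureState (vec k) * B := by
            exact Finset.sum_congr rfl fun k _ => hrw k
        _ = B * T * B := by rw [hT, Finset.mul_sum, Finset.sum_mul]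
        _ = 1 := by
            rw [← hCC, ← Matrix.mul_assoc B C C, hBC, Matrix.one_mul, hCB]
    · intro ψ₁ ψ₂ hu1 hu2 htr
      set σ₁ := pureState (B *ᵥ ψ₁) with hσ1
      set σ₂ := pureState (B *ᵥ ψ₂) with hσ2
      have key : ∀ k : Fin (M + 1),
          (σ₁ * pureState (vec k)).trace = (σ₂ * pureState (vec k)).trace := by
        intro k
        have h : (pureState ψ₁ * pureState (B *ᵥ vec k)).trace
            = (pureState ψ₂ * pureState (B *ᵥ vec k)).trace := htr k
        rwa [trace_swap hBH, trace_swap hBH] at h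
      have hcs : ∀ j (k : Fin d'),
          (σ₁ * pureState (φ j (Fin.castSucc k))).trace
            = (σ₂ * pureState (φ j (Fin.castSucc k))).trace := by
        intro j k
        have h := key (Fin.castSucc (finProdFinEquiv (j, k)))
        simp only [hvec, Fin.lastCases_castSucc, Equiv.symm_apply_apply] at h
        exact h
      have h0last : (σ₁ * pureState (φ 0 (Fin.last d'))).trace
          = (σ₂ * pureState (φ 0 (Fin.last d'))).trace := by
        have h := key (Fin.last M)
        simp only [hvec, Fin.lastCases_last] at h
        exact h
      have hσtr : ∀ (σ : Matrix (Fin (d' + 1)) (Fin (d' + 1)) ℂ) j,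
          σ.trace = ∑ k, (σ * pureState (φ j k)).trace := by
        intro σ j
        calc σ.trace = (σ * 1).trace := by rw [Matrix.mul_one]
          _ = (σ * ∑ k, pureState (φ j k)).trace := by rw [hbasis j]
          _ = ∑ k, (σ * pureState (φ j k)).trace := by
              rw [Finset.mul_sum, Matrix.trace_sum]
      have htr12 : σ₁.trace = σ₂.trace := by
        rw [hσtr σ₁ 0, hσtr σ₂ 0, Fin.sum_univ_castSucc, Fin.sum_univ_castSucc, h0last]
        congr 1
        exact Finset.sum_congr rfl fun k _ => hcs 0 k
      have hall : ∀ j (k : Fin (d' + 1)),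
          (σ₁ * pureState (φ j k)).trace = (σ₂ * pureState (φ j k)).trace := by
        intro j k
        refine Fin.lastCases ?_ (fun k => hcs j k) k
        have e1 : (σ₁ * pureState (φ j (Fin.last d'))).trace
            = σ₁.trace - ∑ k : Fin d', (σ₁ * pureState (φ j (Fin.castSucc k))).trace := by
          rw [hσtr σ₁ j, Fin.sum_univ_castSucc]; ring
        have e2 : (σ₂ * pureState (φ j (Fin.last d'))).trace
            = σ₂.trace - ∑ k : Fin d', (σ₂ * pureState (φ j (Fin.castSucc k))).trace := by
          rw [hσtr σ₂ j, Fin.sum_univ_castSucc]; ring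
        rw [e1, e2, htr12]
        congr 1
        exact Finset.sum_congr rfl fun k _ => hcs j k
      -- the transformed vectors are nonzero
      have hCBv : ∀ ψ : Fin (d' + 1) → ℂ, C *ᵥ (B *ᵥ ψ) = ψ := by
        intro ψ
        rw [Matrix.mulVec_mulVec, hCB, Matrix.one_mulVec]
      have hwne : ∀ ψ : Fin (d' + 1) → ℂ, IsUnitVec ψ → B *ᵥ ψ ≠ 0 := by
        intro ψ hu h
        have : ψ = 0 := by rw [← hCBv ψ, h, Matrix.mulVec_zero]
        rw [IsUnitVec, this] at hu
        simp at hu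
      -- norms
      have wnorm : ∀ w : Fin (d' + 1) → ℂ,
          star w ⬝ᵥ w = ((∑ i, Complex.normSq (w i) : ℝ) : ℂ) := by
        intro w
        simp only [dotProduct, Pi.star_apply, Complex.star_def]
        push_cast
        exact Finset.sum_congr rfl fun i _ => (Complex.normSq_eq_conj_mul_self).symm
      set n₁ : ℝ := ∑ i, Complex.normSq ((B *ᵥ ψ₁) i) with hn1
      set n₂ : ℝ := ∑ i, Complex.normSq ((B *ᵥ ψ₂) i) with hn2
      have htrσ : ∀ w : Fin (d' + 1) → ℂ, (pureState w).trace
          = ((∑ i, Complex.normSq (w i) : ℝ) : ℂ) := by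
        intro w; rw [trace_pureState, wnorm]
      have hn12 : n₁ = n₂ := by
        have h := htr12
        rw [hσ1, hσ2, htrσ, htrσ] at h
        rw [hn1, hn2]
        exact_mod_cast h
      have hn1pos : 0 < n₁ := by
        rcases (Finset.sum_nonneg fun i _ => Complex.normSq_nonneg _ : (0:ℝ) ≤ n₁).lt_or_eq
          with h | h
        · exact h
        · exfalso
          apply hwne ψ₁ hu1
          funext i
          have := (Finset.sum_eq_zero_iff_of_nonneg
            (fun i _ => Complex.normSq_nonneg ((B *ᵥ ψ₁) i))).mp h.symm i (Finset.mem_univ i)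
          simpa [Complex.normSq_eq_zero] using this
      set r : ℝ := Real.sqrt n₁ with hr
      have hrpos : 0 < r := Real.sqrt_pos.mpr hn1pos
      have hr2 : r * r = n₁ := Real.mul_self_sqrt hn1pos.le
      set c : ℂ := ((r⁻¹ : ℝ) : ℂ) with hc
      have hcc : c * star c = ((r⁻¹ * r⁻¹ : ℝ) : ℂ) := by
        rw [hc, Complex.star_def, Complex.conj_ofReal]
        push_cast
        ring
      set χ₁ : Fin (d' + 1) → ℂ := c • (B *ᵥ ψ₁) with hχ1
      set χ₂ : Fin (d' + 1) → ℂ := c • (B *ᵥ ψ₂) with hχ2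
      have hpsχ : ∀ (w : Fin (d' + 1) → ℂ), pureState (c • w)
          = ((r⁻¹ * r⁻¹ : ℝ) : ℂ) • pureState w := by
        intro w; rw [pureState_smul, hcc]
      have hχu : ∀ (w : Fin (d' + 1) → ℂ), (∑ i, Complex.normSq (w i) : ℝ) = n₁ →
          IsUnitVec (c • w) := by
        intro w hw
        rw [IsUnitVec, star_smul, smul_dotProduct, dotProduct_smul,
          wnorm, hw, smul_eq_mul, smul_eq_mul, hc, Complex.star_def, Complex.conj_ofReal,
          ← Complex.ofReal_mul, ← Complex.ofReal_mul]
        norm_cast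
        field_simp
        linarith [hr2]
      have hχu1 : IsUnitVec χ₁ := hχu _ hn1.symm
      have hχu2 : IsUnitVec χ₂ := hχu _ (hn2.symm.trans hn12.symm)
      have hfin : ∀ j k, star (φ j k) ⬝ᵥ (pureState χ₁).mulVec (φ j k)
          = star (φ j k) ⬝ᵥ (pureState χ₂).mulVec (φ j k) := by
        intro j k
        have h := hall j k
        rw [trace_mul_pureState, trace_mul_pureState] at h
        rw [hχ1, hχ2, hpsχ, hpsχ, ← hσ1, ← hσ2, Matrix.smul_mulVec,
          Matrix.smul_mulVec, dotProduct_smul, dotProduct_smul, h]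
      have hps := hdist χ₁ χ₂ hχu1 hχu2 hfin
      have hσeq : σ₁ = σ₂ := by
        have h : ((r⁻¹ * r⁻¹ : ℝ) : ℂ) • σ₁ = ((r⁻¹ * r⁻¹ : ℝ) : ℂ) • σ₂ := by
          have h' := hps
          rw [hχ1, hχ2, hpsχ, hpsχ, ← hσ1, ← hσ2] at h'
          exact h'
        have hne : ((r⁻¹ * r⁻¹ : ℝ) : ℂ) ≠ 0 := by
          simp only [ne_eq, Complex.ofReal_eq_zero]
          exact mul_ne_zero (inv_ne_zero hrpos.ne') (inv_ne_zero hrpos.ne')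
        exact smul_right_injective _ hne h
      have hback : ∀ ψ : Fin (d' + 1) → ℂ,
          C * pureState (B *ᵥ ψ) * C = pureState ψ := by
        intro ψ
        rw [← conj_pureState hBH ψ]
        simp only [← Matrix.mul_assoc]
        rw [hCB, Matrix.one_mul, Matrix.mul_assoc, hBC, Matrix.mul_one]
      rw [← hback ψ₁, ← hback ψ₂, ← hσ1, ← hσ2, hσeq]
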